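/- Kullback–Leibler version of the high-probability two-point bound: let δ ∈ (0,1/2), and suppose θ₁,θ₂ ∈ Θ, P₁ ∈ 𝒫_{θ₁} and P₂ ∈ 𝒫_{θ₂} satisfy KL(P₁,P₂) < log(1/(4δ(1−δ))). Then, writing η := d(θ₁,θ₂)/2, the lower minimax quantile satisfies M_−(δ) ≥ g(η). -/

import Mathlib

open MeasureTheory ENNReal
open scoped Classical

section BH
variable {𝒳 : Type*} [MeasurableSpace 𝒳] (P Q : Measure 𝒳)

lemma sqA [SigmaFinite P] [SigmaFinite Q] (hPQ : P ≪ Q) {E : Set 𝒳} (hE : MeasurableSet E) :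
    ∫⁻ x in E, ENNReal.ofReal (Real.exp (- llr P Q x / 2) ^ 2) ∂P ≤ Q E := by
  have hρ : Measurable (P.rnDeriv Q) := Measure.measurable_rnDeriv P Q
  have hmeas : Measurable fun x => ENNReal.ofReal (Real.exp (- llr P Q x / 2) ^ 2) :=
    (((measurable_llr P Q).neg.div_const 2).exp.pow_const 2).ennreal_ofReal
  rw [← setLIntegral_rnDeriv_mul hPQ hmeas.aemeasurable hE]
  calc ∫⁻ x in E, P.rnDeriv Q x * ENNReal.ofReal (Real.exp (- llr P Q x / 2) ^ 2) ∂Q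
      ≤ ∫⁻ _ in E, 1 ∂Q := by
        refine setLIntegral_mono_ae (by fun_prop) ?_
        filter_upwards [Measure.rnDeriv_lt_top P Q] with x hx _
        rcases eq_or_ne (P.rnDeriv Q x) 0 with h0 | h0
        · simp [h0]
        · have ht : 0 < (P.rnDeriv Q x).toReal := ENNReal.toReal_pos h0 hx.ne
          have : Real.exp (- llr P Q x / 2) ^ 2 = ((P.rnDeriv Q x).toReal)⁻¹ := by
            rw [← Real.exp_nat_mul]
            have : (2 : ℕ) * (- llr P Q x / 2) = - llr P Q x := by ring
            rw [this, llr_def, Real.exp_neg, Real.exp_log ht]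
          rw [this]
          calc P.rnDeriv Q x * ENNReal.ofReal (P.rnDeriv Q x).toReal⁻¹
              = ENNReal.ofReal ((P.rnDeriv Q x).toReal * (P.rnDeriv Q x).toReal⁻¹) := by
                rw [ENNReal.ofReal_mul ENNReal.toReal_nonneg, ENNReal.ofReal_toReal hx.ne]
            _ ≤ 1 := by rw [mul_inv_cancel₀ ht.ne']; simp
    _ = Q E := by simp [hE]

lemma lintA [SigmaFinite P] [SigmaFinite Q] (hPQ : P ≪ Q) {E : Set 𝒳} (hE : MeasurableSet E) :
    ∫⁻ x in E, ENNReal.ofReal (Real.exp (- llr P Q x / 2)) ∂P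
      ≤ (Q E) ^ (1/2 : ℝ) * (P E) ^ (1/2 : ℝ) := by
  have hmeas : Measurable fun x => ENNReal.ofReal (Real.exp (- llr P Q x / 2)) :=
    (((measurable_llr P Q).neg.div_const 2).exp).ennreal_ofReal
  have hconj : Real.HolderConjugate 2 2 := Real.holderConjugate_iff.mpr ⟨one_lt_two, by norm_num⟩
  have hholder := ENNReal.lintegral_mul_le_Lp_mul_Lq (P.restrict E) hconj
    hmeas.aemeasurable (aemeasurable_const (b := (1:ℝ≥0∞)))
  simp only [Pi.mul_apply, Pi.one_apply, mul_one, ENNReal.one_rpow] at hholder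
  calc ∫⁻ x in E, ENNReal.ofReal (Real.exp (- llr P Q x / 2)) ∂P
      ≤ (∫⁻ x in E, ENNReal.ofReal (Real.exp (- llr P Q x / 2)) ^ (2:ℝ) ∂P) ^ (1/2:ℝ)
        * (∫⁻ _ in E, (1:ℝ≥0∞) ∂P) ^ (1/2:ℝ) := hholder
    _ ≤ (Q E) ^ (1/2 : ℝ) * (P E) ^ (1/2 : ℝ) := by
        gcongr
        · calc ∫⁻ x in E, ENNReal.ofReal (Real.exp (- llr P Q x / 2)) ^ (2:ℝ) ∂P
              = ∫⁻ x in E, ENNReal.ofReal (Real.exp (- llr P Q x / 2) ^ 2) ∂P := by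
                refine lintegral_congr fun x => ?_
                rw [show ((2:ℝ) = ((2:ℕ):ℝ)) by norm_num, ENNReal.rpow_natCast,
                  ENNReal.ofReal_pow (Real.exp_nonneg _)]
            _ ≤ Q E := sqA P Q hPQ hE
        · simp [hE]

lemma intH [IsProbabilityMeasure P] [IsProbabilityMeasure Q] (hPQ : P ≪ Q) :
    Integrable (fun x => Real.exp (- llr P Q x / 2)) P := by
  refine ⟨(((measurable_llr P Q).neg.div_const 2).exp).aestronglyMeasurable, ?_⟩
  rw [hasFiniteIntegral_iff_ofReal (Filter.Eventually.of_forall fun x => (Real.exp_nonneg _))]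
  have := lintA P Q hPQ MeasurableSet.univ
  rw [Measure.restrict_univ] at this
  refine lt_of_le_of_lt this ?_
  simp [measure_univ]

lemma intB [IsProbabilityMeasure P] [IsProbabilityMeasure Q] (hPQ : P ≪ Q)
    {E : Set 𝒳} (hE : MeasurableSet E) :
    ∫ x in E, Real.exp (- llr P Q x / 2) ∂P
      ≤ Real.sqrt (Q E).toReal * Real.sqrt (P E).toReal := by
  rw [MeasureTheory.integral_eq_lintegral_of_nonneg_ae (f := fun x => Real.exp (- llr P Q x / 2))
    (Filter.Eventually.of_forall fun x => Real.exp_nonneg _)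
    (((measurable_llr P Q).neg.div_const 2).exp).aestronglyMeasurable]
  have hfin : (Q E) ^ (1/2 : ℝ) * (P E) ^ (1/2 : ℝ) ≠ ⊤ :=
    ENNReal.mul_ne_top (ENNReal.rpow_ne_top_of_nonneg (by norm_num) (measure_ne_top _ _))
      (ENNReal.rpow_ne_top_of_nonneg (by norm_num) (measure_ne_top _ _))
  calc (∫⁻ x in E, ENNReal.ofReal (Real.exp (- llr P Q x / 2)) ∂P).toReal
      ≤ ((Q E) ^ (1/2 : ℝ) * (P E) ^ (1/2 : ℝ)).toReal :=
        ENNReal.toReal_mono hfin (lintA P Q hPQ hE)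
    _ = Real.sqrt (Q E).toReal * Real.sqrt (P E).toReal := by
        rw [ENNReal.toReal_mul, Real.sqrt_eq_rpow, Real.sqrt_eq_rpow,
          ENNReal.toReal_rpow, ENNReal.toReal_rpow]

lemma jensenExp [IsProbabilityMeasure P] [IsProbabilityMeasure Q] (hPQ : P ≪ Q)
    (hint : Integrable (llr P Q) P) :
    Real.exp (∫ x, (- llr P Q x / 2) ∂P) ≤ ∫ x, Real.exp (- llr P Q x / 2) ∂P := by
  have h := convexOn_exp.map_integral_le (f := fun x => - llr P Q x / 2)
    Real.continuous_exp.continuousOn isClosed_univ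
    (Filter.Eventually.of_forall fun x => Set.mem_univ _)
    ((hint.neg).div_const 2) ?_
  · exact h
  · exact intH P Q hPQ

lemma BHbound [IsProbabilityMeasure P] [IsProbabilityMeasure Q] (hPQ : P ≪ Q)
    (hint : Integrable (llr P Q) P) {E : Set 𝒳} (hE : MeasurableSet E) :
    Real.exp (- (∫ x, llr P Q x ∂P))
      ≤ ((P E).toReal + (Q Eᶜ).toReal) * ((P Eᶜ).toReal + (Q E).toReal) := by
  set h : 𝒳 → ℝ := fun x => Real.exp (- llr P Q x / 2) with hh
  have hint2 : Integrable h P := intH P Q hPQ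
  have hsplit : ∫ x, h x ∂P = ∫ x in E, h x ∂P + ∫ x in Eᶜ, h x ∂P :=
    (integral_add_compl hE hint2).symm
  have h1 : ∫ x in E, h x ∂P ≤ Real.sqrt (Q E).toReal * Real.sqrt (P E).toReal := intB P Q hPQ hE
  have h2 : ∫ x in Eᶜ, h x ∂P ≤ Real.sqrt (Q Eᶜ).toReal * Real.sqrt (P Eᶜ).toReal :=
    intB P Q hPQ hE.compl
  have hj : Real.exp (- (∫ x, llr P Q x ∂P) / 2) ≤ ∫ x, h x ∂P := by
    have hJ := jensenExp P Q hPQ hint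
    have heq : ∫ x, (- llr P Q x / 2) ∂P = - (∫ x, llr P Q x ∂P) / 2 := by
      rw [integral_div, integral_neg]
    rwa [heq] at hJ
  have hsq : Real.exp (- (∫ x, llr P Q x ∂P)) = Real.exp (- (∫ x, llr P Q x ∂P) / 2) ^ 2 := by
    rw [← Real.exp_nat_mul]; ring_nf
  set p1 := Real.sqrt (P E).toReal
  set p2 := Real.sqrt (P Eᶜ).toReal
  set q1 := Real.sqrt (Q E).toReal
  set q2 := Real.sqrt (Q Eᶜ).toReal
  have hp1 : p1 ^ 2 = (P E).toReal := Real.sq_sqrt ENNReal.toReal_nonneg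
  have hp2 : p2 ^ 2 = (P Eᶜ).toReal := Real.sq_sqrt ENNReal.toReal_nonneg
  have hq1 : q1 ^ 2 = (Q E).toReal := Real.sq_sqrt ENNReal.toReal_nonneg
  have hq2 : q2 ^ 2 = (Q Eᶜ).toReal := Real.sq_sqrt ENNReal.toReal_nonneg
  have hle : Real.exp (- (∫ x, llr P Q x ∂P) / 2) ≤ q1 * p1 + q2 * p2 := by
    calc Real.exp (- (∫ x, llr P Q x ∂P) / 2) ≤ ∫ x, h x ∂P := hj
      _ = ∫ x in E, h x ∂P + ∫ x in Eᶜ, h x ∂P := hsplit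
      _ ≤ q1 * p1 + q2 * p2 := add_le_add h1 h2
  rw [hsq, ← hp1, ← hp2, ← hq1, ← hq2]
  have hexp : (0:ℝ) ≤ Real.exp (- (∫ x, llr P Q x ∂P) / 2) := Real.exp_nonneg _
  nlinarith [sq_nonneg (p1 * p2 - q1 * q2), Real.sqrt_nonneg ((P E).toReal),
    Real.sqrt_nonneg ((P Eᶜ).toReal), Real.sqrt_nonneg ((Q E).toReal),
    Real.sqrt_nonneg ((Q Eᶜ).toReal), mul_nonneg (Real.sqrt_nonneg ((Q E).toReal)) (Real.sqrt_nonneg ((P E).toReal)),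
    mul_nonneg (Real.sqrt_nonneg ((Q Eᶜ).toReal)) (Real.sqrt_nonneg ((P Eᶜ).toReal))]
end BH


/-- The lower minimax `(1-δ)`th quantile. -/
noncomputable def lowerMinimaxQuantile {Θ 𝒳 : Type*} [MeasurableSpace Θ] [MeasurableSpace 𝒳]
    (Pfam : Θ → Set (Measure 𝒳)) (L : Θ → Θ → ℝ) (δ : ℝ) : ℝ≥0∞ :=
  sInf {r : ℝ≥0∞ |
    (⨅ T : {f : 𝒳 → Θ // Measurable f}, ⨆ θ : Θ, ⨆ P ∈ Pfam θ,
      P {x | r < ENNReal.ofReal (L (T.1 x) θ)}) ≤ ENNReal.ofReal δ}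

/-- Kullback--Leibler divergence: `∫ log(dP/dQ) dP` when `P ≪ Q` (and the log-likelihood
ratio is `P`-integrable), and `+∞` otherwise. -/
noncomputable def klDiv' {𝒳 : Type*} [MeasurableSpace 𝒳] (P Q : Measure 𝒳) : ℝ≥0∞ :=
  if P ≪ Q ∧ Integrable (llr P Q) P then ENNReal.ofReal (∫ x, llr P Q x ∂P) else ⊤

/-- Kullback--Leibler version of the high-probability two-point bound. -/
theorem lowerMinimaxQuantile_ge_of_klDiv_lt
    {Θ 𝒳 : Type*} [PseudoMetricSpace Θ] [Nonempty Θ] [MeasurableSpace Θ] [BorelSpace Θ]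
    [MeasurableSpace 𝒳]
    (Pfam : Θ → Set (Measure 𝒳)) (hPfam : ∀ θ, ∀ P ∈ Pfam θ, IsProbabilityMeasure P)
    (g : ℝ → ℝ) (hg : MonotoneOn g (Set.Ici 0)) (hg0 : ∀ x ∈ Set.Ici (0 : ℝ), 0 ≤ g x)
    (δ : ℝ) (hδ : δ ∈ Set.Ioo (0 : ℝ) (1/2))
    (θ₁ θ₂ : Θ) (P₁ P₂ : Measure 𝒳) (hP₁ : P₁ ∈ Pfam θ₁) (hP₂ : P₂ ∈ Pfam θ₂)
    (hKL : klDiv' P₁ P₂ < ENNReal.ofReal (Real.log (1 / (4 * δ * (1 - δ))))) :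
    ENNReal.ofReal (g (dist θ₁ θ₂ / 2)) ≤
      lowerMinimaxQuantile Pfam (fun a b => g (dist a b)) δ := by
  haveI hPM1 : IsProbabilityMeasure P₁ := hPfam _ _ hP₁
  haveI hPM2 : IsProbabilityMeasure P₂ := hPfam _ _ hP₂
  obtain ⟨hδ0, hδhalf⟩ := hδ
  set η : ℝ := dist θ₁ θ₂ / 2 with hη
  have hη0 : η ∈ Set.Ici (0:ℝ) := Set.mem_Ici.mpr (div_nonneg dist_nonneg (by norm_num))
  by_cases hcond : P₁ ≪ P₂ ∧ Integrable (llr P₁ P₂) P₁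
  swap
  · exfalso; rw [klDiv', if_neg hcond] at hKL; exact (not_top_lt hKL)
  obtain ⟨hac, hint⟩ := hcond
  rw [klDiv', if_pos ⟨hac, hint⟩] at hKL
  set k := ∫ x, llr P₁ P₂ x ∂P₁ with hk
  have hprod_pos : 0 < 4 * δ * (1 - δ) := by nlinarith
  have hprod_lt_one : 4 * δ * (1 - δ) < 1 := by nlinarith [sq_nonneg (1 - 2*δ)]
  have hkL : k < Real.log (1 / (4 * δ * (1 - δ))) := by
    by_contra hcon
    push_neg at hcon
    exact absurd hKL (not_lt.mpr (ENNReal.ofReal_le_ofReal hcon))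
  have hkey : 4 * δ * (1 - δ) < Real.exp (-k) := by
    have h1 : Real.exp (- Real.log (1 / (4 * δ * (1 - δ)))) < Real.exp (-k) :=
      Real.exp_lt_exp.mpr (by linarith)
    have h2 : Real.exp (- Real.log (1 / (4 * δ * (1 - δ)))) = 4 * δ * (1 - δ) := by
      rw [Real.exp_neg, Real.exp_log (by positivity), one_div, inv_inv]
    linarith
  set ε : ℝ := min ((Real.exp (-k) - 4 * δ * (1 - δ)) / 8) ((1/2 - δ) / 2) with hε
  have hε0 : 0 < ε := lt_min (by linarith) (by linarith)
  set δ' : ℝ := δ + ε with hδ'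
  have hδ'δ : δ < δ' := by simp only [hδ']; linarith
  have hδ'half : δ' < 1/2 := by
    have h := min_le_right ((Real.exp (-k) - 4 * δ * (1 - δ)) / 8) ((1/2 - δ) / 2)
    simp only [hδ']; rw [hε]; linarith
  have hδ'key : 4 * δ' * (1 - δ') < Real.exp (-k) := by
    have h8 := min_le_left ((Real.exp (-k) - 4 * δ * (1 - δ)) / 8) ((1/2 - δ) / 2)
    have h8' : ε ≤ (Real.exp (-k) - 4 * δ * (1 - δ)) / 8 := by rw [hε]; exact h8
    simp only [hδ']
    nlinarith
  rw [lowerMinimaxQuantile]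
  refine le_sInf fun r hr => ?_
  by_contra hlt
  push_neg at hlt
  simp only [Set.mem_setOf_eq] at hr
  have hinf_lt : (⨅ T : {f : 𝒳 → Θ // Measurable f}, ⨆ θ : Θ, ⨆ P ∈ Pfam θ,
      P {x | r < ENNReal.ofReal (g (dist (T.1 x) θ))}) < ENNReal.ofReal δ' :=
    lt_of_le_of_lt hr ((ENNReal.ofReal_lt_ofReal_iff_of_nonneg hδ0.le).mpr hδ'δ)
  haveI : Nonempty {f : 𝒳 → Θ // Measurable f} := ⟨⟨fun _ => θ₁, measurable_const⟩⟩
  obtain ⟨T, hT⟩ := iInf_lt_iff.mp hinf_lt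
  have hbound : ∀ θ (P : Measure 𝒳), P ∈ Pfam θ →
      P {x | r < ENNReal.ofReal (g (dist (T.1 x) θ))} < ENNReal.ofReal δ' := by
    intro θ P hP
    refine lt_of_le_of_lt ?_ hT
    calc P {x | r < ENNReal.ofReal (g (dist (T.1 x) θ))}
        ≤ ⨆ P ∈ Pfam θ, P {x | r < ENNReal.ofReal (g (dist (T.1 x) θ))} :=
          le_biSup (f := fun P : Measure 𝒳 => P {x | r < ENNReal.ofReal (g (dist (T.1 x) θ))}) hP
      _ ≤ ⨆ θ, ⨆ P ∈ Pfam θ, P {x | r < ENNReal.ofReal (g (dist (T.1 x) θ))} :=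
          le_iSup (fun θ => ⨆ P ∈ Pfam θ, P {x | r < ENNReal.ofReal (g (dist (T.1 x) θ))}) θ
  set A : Set 𝒳 := T.1 ⁻¹' (Metric.ball θ₁ η)ᶜ with hA
  have hAmeas : MeasurableSet A := T.2 measurableSet_ball.compl
  have hsubset : ∀ θ, T.1 ⁻¹' (Metric.ball θ η)ᶜ ⊆
      {x | r < ENNReal.ofReal (g (dist (T.1 x) θ))} := by
    intro θ x hx
    simp only [Set.mem_preimage, Set.mem_compl_iff, Metric.mem_ball, not_lt] at hx
    have hgle : g η ≤ g (dist (T.1 x) θ) := hg hη0 (Set.mem_Ici.mpr dist_nonneg) hx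
    exact lt_of_lt_of_le hlt (ENNReal.ofReal_le_ofReal hgle)
  have hPA : P₁ A < ENNReal.ofReal δ' :=
    lt_of_le_of_lt (measure_mono (hsubset θ₁)) (hbound θ₁ P₁ hP₁)
  have hPB : P₂ (T.1 ⁻¹' (Metric.ball θ₂ η)ᶜ) < ENNReal.ofReal δ' :=
    lt_of_le_of_lt (measure_mono (hsubset θ₂)) (hbound θ₂ P₂ hP₂)
  have hAcB : Aᶜ ⊆ T.1 ⁻¹' (Metric.ball θ₂ η)ᶜ := by
    intro x hx
    simp only [hA, Set.mem_compl_iff, Set.mem_preimage, not_not, Metric.mem_ball, not_lt]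
      at hx ⊢
    by_contra hcon
    push_neg at hcon
    have htri := dist_triangle θ₁ (T.1 x) θ₂
    rw [dist_comm θ₁ (T.1 x)] at htri
    rw [hη] at hx hcon
    linarith
  have hPAc : P₂ Aᶜ < ENNReal.ofReal δ' := lt_of_le_of_lt (measure_mono hAcB) hPB
  have ha : (P₁ A).toReal < δ' := ENNReal.toReal_lt_of_lt_ofReal hPA
  have hb : (P₂ Aᶜ).toReal < δ' := ENNReal.toReal_lt_of_lt_ofReal hPAc
  have hcompl1 : (P₁ Aᶜ).toReal = 1 - (P₁ A).toReal := by
    rw [measure_compl hAmeas (measure_ne_top _ _), measure_univ,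
      ENNReal.toReal_sub_of_le prob_le_one ENNReal.one_ne_top, ENNReal.toReal_one]
  have hcompl2 : (P₂ A).toReal = 1 - (P₂ Aᶜ).toReal := by
    have : (P₂ (Aᶜᶜ)).toReal = 1 - (P₂ Aᶜ).toReal := by
      rw [measure_compl hAmeas.compl (measure_ne_top _ _), measure_univ,
        ENNReal.toReal_sub_of_le prob_le_one ENNReal.one_ne_top, ENNReal.toReal_one]
    rwa [compl_compl] at this
  have hBH := BHbound P₁ P₂ hac hint hAmeas
  rw [← hk] at hBH
  set s : ℝ := (P₁ A).toReal + (P₂ Aᶜ).toReal with hs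
  have hs0 : 0 ≤ s := add_nonneg ENNReal.toReal_nonneg ENNReal.toReal_nonneg
  have hs2δ' : s < 2 * δ' := by rw [hs]; linarith
  have hRHS : ((P₁ A).toReal + (P₂ Aᶜ).toReal) * ((P₁ Aᶜ).toReal + (P₂ A).toReal)
      = s * (2 - s) := by
    rw [hcompl1, hcompl2, hs]; ring
  rw [hRHS] at hBH
  have h1 : 0 < 2 * δ' - s := by linarith
  have h2 : 0 < 2 - s - 2 * δ' := by linarith
  nlinarith [mul_pos h1 h2]
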